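/- arXiv:1802.01851 — 2 statements merged into one kernel-verified Lean document; each statement's English description precedes it below -/
import Mathlib

section
/- For every finite non-abelian simple group G₀ and N ≥ 1, the outer automorphism group Out(G₀^N) is isomorphic to Out(G₀)^N ⋊ S_N, with S_N acting by permutation of the factors. -/
/-- The subgroup of inner automorphisms is normal in `Aut(G)`. -/
instance innNormal (G : Type) [Group G] :
    ((MulAut.conj : G →* MulAut G).range).Normal := by
  constructor
  rintro x ⟨h, rfl⟩ g
  exact ⟨g h, by ext y; simp [mul_assoc]⟩

/-- The outer automorphism group `Out(G) = Aut(G)/Inn(G)`. -/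
def Out (G : Type) [Group G] : Type :=
  MulAut G ⧸ (MulAut.conj : G →* MulAut G).range

instance (G : Type) [Group G] : Group (Out G) :=
  QuotientGroup.Quotient.group _

/-- The action of the symmetric group on a direct power, permuting the coordinates. -/
def permMulAut (N : ℕ) (A : Type) [Group A] :
    Equiv.Perm (Fin N) →* MulAut (Fin N → A) where
  toFun σ :=
    { toFun := fun f i => f (σ⁻¹ i)
      invFun := fun f i => f (σ i)
      left_inv := fun f => by funext i; simp
      right_inv := fun f => by funext i; simp
      map_mul' := fun f g => rfl }
  map_one' := by ext f i; simp
  map_mul' := fun σ τ => by ext f i; simp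

section OutPower

variable {G₀ : Type} [Group G₀] {N : ℕ}

/-- The `i`-th factor of a direct power, as a subgroup. -/
def factorSub (G₀ : Type) [Group G₀] {N : ℕ} (i : Fin N) : Subgroup (Fin N → G₀) :=
  (MonoidHom.mulSingle (fun _ : Fin N => G₀) i).range

lemma mem_factorSub {i : Fin N} {f : Fin N → G₀} :
    f ∈ factorSub G₀ i ↔ ∃ x : G₀, Pi.mulSingle i x = f :=
  MonoidHom.mem_range

lemma mem_factorSub_iff {i : Fin N} {f : Fin N → G₀} :
    f ∈ factorSub G₀ i ↔ ∀ j, j ≠ i → f j = 1 := by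
  rw [mem_factorSub]
  constructor
  · rintro ⟨x, rfl⟩ j hj
    exact Pi.mulSingle_eq_of_ne (M := fun _ : Fin N => G₀) hj x
  · intro h
    refine ⟨f i, funext fun j => ?_⟩
    rcases eq_or_ne j i with rfl | hj
    · exact Pi.mulSingle_eq_same (M := fun _ : Fin N => G₀) j (f j)
    · rw [h j hj]
      exact Pi.mulSingle_eq_of_ne (M := fun _ : Fin N => G₀) hj (f i)

lemma mulSingle_mem_factorSub (i : Fin N) (x : G₀) :
    Pi.mulSingle i x ∈ factorSub G₀ i :=
  mem_factorSub.2 ⟨x, rfl⟩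

lemma factorSub_le_factorSub [Nontrivial G₀] {i j : Fin N}
    (h : factorSub G₀ i ≤ factorSub G₀ j) : i = j := by
  by_contra hij
  obtain ⟨x, hx⟩ := exists_ne (1 : G₀)
  have := mem_factorSub_iff.1 (h (mulSingle_mem_factorSub i x)) i hij
  rw [Pi.mulSingle_eq_same] at this
  exact hx this

section Simple

variable [IsSimpleGroup G₀]

lemma center_eq_bot' (hna : ¬ ∀ a b : G₀, a * b = b * a) : Subgroup.center G₀ = ⊥ := by
  rcases IsSimpleGroup.eq_bot_or_eq_top_of_normal (Subgroup.center G₀) inferInstance with h | h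
  · exact h
  · exfalso
    apply hna
    intro a b
    have hb : b ∈ Subgroup.center G₀ := by rw [h]; trivial
    exact Subgroup.mem_center_iff.1 hb a

lemma exists_not_comm (hna : ¬ ∀ a b : G₀, a * b = b * a) {x : G₀} (hx : x ≠ 1) : ∃ g : G₀, g * x ≠ x * g := by
  by_contra h
  push_neg at h
  have : x ∈ Subgroup.center G₀ := Subgroup.mem_center_iff.2 h
  rw [center_eq_bot' hna] at this
  exact hx this

/-- Every nontrivial normal subgroup of a power of a nonabelian simple group
contains a full factor. -/
lemma exists_factorSub_le (hna : ¬ ∀ a b : G₀, a * b = b * a) {K : Subgroup (Fin N → G₀)} (hK : K.Normal) (hKbot : K ≠ ⊥) :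
    ∃ i, factorSub G₀ i ≤ K := by
  obtain ⟨⟨n, hnK⟩, hn1⟩ := Subgroup.ne_bot_iff_exists_ne_one.1 hKbot
  have hn1' : n ≠ 1 := fun h => hn1 (Subtype.ext h)
  have : ∃ i, n i ≠ 1 := by
    by_contra h
    push_neg at h
    exact hn1' (funext fun i => h i)
  obtain ⟨i, hni⟩ := this
  obtain ⟨g, hg⟩ := exists_not_comm hna hni
  set c : Fin N → G₀ := (Pi.mulSingle i g) * n * (Pi.mulSingle i g)⁻¹ * n⁻¹ with hc
  have hcK : c ∈ K := K.mul_mem (hK.conj_mem n hnK (Pi.mulSingle i g)) (K.inv_mem hnK)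
  have hci : c i = g * n i * g⁻¹ * (n i)⁻¹ := by simp [hc]
  have hci1 : c i ≠ 1 := by
    rw [hci]
    intro h
    apply hg
    have := congrArg (fun y => y * n i * g) h
    simpa [mul_assoc] using this
  have hcfac : ∀ j, j ≠ i → c j = 1 := by
    intro j hj
    simp [hc, Pi.mulSingle_eq_of_ne hj]
  -- The subgroup of `G₀` of elements `x` with `mulSingle i x ∈ K`.
  set T : Subgroup G₀ := K.comap (MonoidHom.mulSingle (fun _ : Fin N => G₀) i) with hT
  have hTnormal : T.Normal := by
    constructor
    intro x hx g'
    have : Pi.mulSingle i (g' * x * g'⁻¹)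
        = (Pi.mulSingle i g' : Fin N → G₀) * (Pi.mulSingle i x) * (Pi.mulSingle i g')⁻¹ := by
      rw [Pi.mulSingle_mul, Pi.mulSingle_mul, Pi.mulSingle_inv]
    show Pi.mulSingle i (g' * x * g'⁻¹) ∈ K
    rw [this]
    exact hK.conj_mem _ hx _
  have hTbot : T ≠ ⊥ := by
    intro h
    have hciT : c i ∈ T := by
      show Pi.mulSingle i (c i) ∈ K
      have : Pi.mulSingle i (c i) = c := by
        funext j
        by_cases hj : j = i
        · subst hj; simp
        · rw [Pi.mulSingle_eq_of_ne hj, (hcfac j hj).symm]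
      rwa [this]
    rw [h] at hciT
    exact hci1 hciT
  have hTtop : T = ⊤ := by
    rcases IsSimpleGroup.eq_bot_or_eq_top_of_normal T hTnormal with h | h
    · exact absurd h hTbot
    · exact h
  refine ⟨i, ?_⟩
  rintro f hf
  obtain ⟨x, rfl⟩ := mem_factorSub.1 hf
  have : x ∈ T := hTtop ▸ Subgroup.mem_top x
  exact this

lemma nontrivial_of_hna (hna : ¬ ∀ a b : G₀, a * b = b * a) : Nontrivial G₀ := by
  by_contra h
  rw [not_nontrivial_iff_subsingleton] at h
  exact hna fun a b => Subsingleton.elim _ _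

/-- An automorphism of a power of a nonabelian simple group maps each factor
onto some factor. -/
lemma exists_map_factorSub (hna : ¬ ∀ a b : G₀, a * b = b * a) (φ : MulAut (Fin N → G₀)) (i : Fin N) :
    ∃ j, (factorSub G₀ i).map φ.toMonoidHom = factorSub G₀ j := by
  haveI := nontrivial_of_hna hna
  have hmapbot : ∀ (ψ : MulAut (Fin N → G₀)) (k : Fin N),
      (factorSub G₀ k).map ψ.toMonoidHom ≠ ⊥ := by
    intro ψ k h
    obtain ⟨x, hx⟩ := exists_ne (1 : G₀)
    have : ψ (Pi.mulSingle k x) ∈ (factorSub G₀ k).map ψ.toMonoidHom :=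
      Subgroup.mem_map.2 ⟨_, mulSingle_mem_factorSub k x, rfl⟩
    rw [h, Subgroup.mem_bot] at this
    have : Pi.mulSingle k x = 1 := ψ.injective (by simpa using this)
    have := congrFun this k
    simp at this
    exact hx this
  have hmapnormal : ∀ (ψ : MulAut (Fin N → G₀)) (k : Fin N),
      ((factorSub G₀ k).map ψ.toMonoidHom).Normal := by
    intro ψ k
    constructor
    rintro m hm g
    obtain ⟨f, hf, rfl⟩ := Subgroup.mem_map.1 hm
    refine Subgroup.mem_map.2 ⟨(ψ.symm g) * f * (ψ.symm g)⁻¹, ?_, by simp⟩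
    rw [mem_factorSub_iff] at hf ⊢
    intro j hj
    simp [hf j hj]
  obtain ⟨j, hj⟩ := exists_factorSub_le hna (hmapnormal φ i) (hmapbot φ i)
  refine ⟨j, le_antisymm ?_ hj⟩
  -- now show `map φ (factorSub i) ≤ factorSub j` using the inverse automorphism
  obtain ⟨k, hk⟩ := exists_factorSub_le hna (hmapnormal φ.symm j) (hmapbot φ.symm j)
  have hk' : (factorSub G₀ j).map φ.symm.toMonoidHom ≤ factorSub G₀ i := by
    rintro m hm
    obtain ⟨f, hf, rfl⟩ := Subgroup.mem_map.1 hm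
    obtain ⟨f', hf', hf'eq⟩ := Subgroup.mem_map.1 (hj hf)
    have : (φ.symm.toMonoidHom : (Fin N → G₀) →* (Fin N → G₀)) f = f' := by
      have := congrArg φ.symm hf'eq
      simpa using this.symm
    rw [this]
    exact hf' 
  have hki : k = i := factorSub_le_factorSub (hk.trans hk')
  subst hki
  -- factorSub k ≤ map φ.symm (factorSub j) implies map φ (factorSub k) ≤ factorSub j
  rintro m hm
  obtain ⟨f, hf, rfl⟩ := Subgroup.mem_map.1 hm
  obtain ⟨f', hf', hf'eq⟩ := Subgroup.mem_map.1 (hk hf)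
  have : φ.toMonoidHom f = f' := by
    have := congrArg φ hf'eq
    simpa using this.symm
  rw [this]
  exact hf'

/-- The index permutation function induced by an automorphism. -/
noncomputable def sigmaFun (hna : ¬ ∀ a b : G₀, a * b = b * a) (φ : MulAut (Fin N → G₀)) (i : Fin N) : Fin N :=
  Classical.choose (exists_map_factorSub hna φ i)

lemma sigmaFun_spec (hna : ¬ ∀ a b : G₀, a * b = b * a) (φ : MulAut (Fin N → G₀)) (i : Fin N) :
    (factorSub G₀ i).map φ.toMonoidHom = factorSub G₀ (sigmaFun hna φ i) :=
  Classical.choose_spec (exists_map_factorSub hna φ i)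

lemma sigmaFun_eq_of (hna : ¬ ∀ a b : G₀, a * b = b * a) (φ : MulAut (Fin N → G₀)) {i j : Fin N}
    (h : ∀ x : G₀, φ (Pi.mulSingle i x) ∈ factorSub G₀ j) : sigmaFun hna φ i = j := by
  haveI := nontrivial_of_hna hna
  apply factorSub_le_factorSub (G₀ := G₀)
  rw [← sigmaFun_spec hna φ i]
  rintro m hm
  obtain ⟨f, hf, rfl⟩ := Subgroup.mem_map.1 hm
  obtain ⟨x, rfl⟩ := mem_factorSub.1 hf
  exact h x

lemma single_mem_map (hna : ¬ ∀ a b : G₀, a * b = b * a) (φ : MulAut (Fin N → G₀)) (i : Fin N) (x : G₀) :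
    φ (Pi.mulSingle i x) ∈ factorSub G₀ (sigmaFun hna φ i) := by
  rw [← sigmaFun_spec hna φ i]
  exact Subgroup.mem_map.2 ⟨_, mulSingle_mem_factorSub i x, rfl⟩

lemma sigmaFun_mul (hna : ¬ ∀ a b : G₀, a * b = b * a) (φ φ' : MulAut (Fin N → G₀)) (i : Fin N) :
    sigmaFun hna (φ * φ') i = sigmaFun hna φ (sigmaFun hna φ' i) := by
  apply sigmaFun_eq_of
  intro x
  obtain ⟨y, hy⟩ := mem_factorSub.1 (single_mem_map hna φ' i x)
  show φ (φ' (Pi.mulSingle i x)) ∈ _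
  rw [← hy]
  exact single_mem_map hna φ _ y

lemma sigmaFun_one (hna : ¬ ∀ a b : G₀, a * b = b * a) (i : Fin N) : sigmaFun hna (1 : MulAut (Fin N → G₀)) i = i :=
  sigmaFun_eq_of hna 1 fun x => mulSingle_mem_factorSub i x

/-- The index permutation induced by an automorphism. -/
noncomputable def sigmaPerm (hna : ¬ ∀ a b : G₀, a * b = b * a) (φ : MulAut (Fin N → G₀)) : Equiv.Perm (Fin N) where
  toFun := sigmaFun hna φ
  invFun := sigmaFun hna φ⁻¹
  left_inv := fun i => by
    rw [← sigmaFun_mul hna φ⁻¹ φ i, inv_mul_cancel, sigmaFun_one]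
  right_inv := fun i => by
    rw [← sigmaFun_mul hna φ φ⁻¹ i, mul_inv_cancel, sigmaFun_one]

/-- The component function of an automorphism at coordinate `i`. -/
noncomputable def psiFun (hna : ¬ ∀ a b : G₀, a * b = b * a) (φ : MulAut (Fin N → G₀)) (i : Fin N) (x : G₀) : G₀ :=
  φ (Pi.mulSingle i x) (sigmaFun hna φ i)

lemma apply_single (hna : ¬ ∀ a b : G₀, a * b = b * a) (φ : MulAut (Fin N → G₀)) (i : Fin N) (x : G₀) :
    φ (Pi.mulSingle i x) = Pi.mulSingle (sigmaFun hna φ i) (psiFun hna φ i x) := by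
  obtain ⟨y, hy⟩ := mem_factorSub.1 (single_mem_map hna φ i x)
  have : y = psiFun hna φ i x := by
    have := congrFun hy (sigmaFun hna φ i)
    simpa [psiFun] using this
  rw [← hy, this]

lemma psiFun_mul_apply (hna : ¬ ∀ a b : G₀, a * b = b * a) (φ φ' : MulAut (Fin N → G₀)) (i : Fin N) (x : G₀) :
    psiFun hna (φ * φ') i x = psiFun hna φ (sigmaFun hna φ' i) (psiFun hna φ' i x) := by
  have h1 : (φ * φ') (Pi.mulSingle i x) = φ (φ' (Pi.mulSingle i x)) := rfl
  rw [psiFun, h1, apply_single hna φ' i x, apply_single hna φ _ _,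
    sigmaFun_mul hna φ φ' i, Pi.mulSingle_eq_same]

/-- The component automorphism of an automorphism at coordinate `i`. -/
noncomputable def psiAut (hna : ¬ ∀ a b : G₀, a * b = b * a) (φ : MulAut (Fin N → G₀)) (i : Fin N) : MulAut G₀ where
  toFun := psiFun hna φ i
  invFun := psiFun hna φ⁻¹ (sigmaFun hna φ i)
  left_inv := fun x => by
    have h := psiFun_mul_apply hna φ⁻¹ φ i x
    rw [inv_mul_cancel] at h
    have h1 : psiFun hna (1 : MulAut (Fin N → G₀)) i x = x := by
      simp [psiFun, sigmaFun_one hna]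
    rw [h1] at h
    exact h.symm
  right_inv := fun x => by
    have h := psiFun_mul_apply hna φ φ⁻¹ (sigmaFun hna φ i) x
    rw [mul_inv_cancel] at h
    have hσ : sigmaFun hna φ⁻¹ (sigmaFun hna φ i) = i := by
      rw [← sigmaFun_mul hna φ⁻¹ φ i, inv_mul_cancel, sigmaFun_one]
    have h1 : psiFun hna (1 : MulAut (Fin N → G₀)) (sigmaFun hna φ i) x = x := by
      simp [psiFun, sigmaFun_one hna]
    rw [h1, hσ] at h
    exact h.symm
  map_mul' := fun x y => by
    simp only [psiFun, Pi.mulSingle_mul, map_mul, Pi.mul_apply]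

lemma sigmaFun_inv_cancel (hna : ¬ ∀ a b : G₀, a * b = b * a) (φ : MulAut (Fin N → G₀))
    (j : Fin N) : sigmaFun hna φ⁻¹ (sigmaFun hna φ j) = j := by
  rw [← sigmaFun_mul hna φ⁻¹ φ, inv_mul_cancel, sigmaFun_one]

lemma sigmaFun_cancel_inv (hna : ¬ ∀ a b : G₀, a * b = b * a) (φ : MulAut (Fin N → G₀))
    (j : Fin N) : sigmaFun hna φ (sigmaFun hna φ⁻¹ j) = j := by
  rw [← sigmaFun_mul hna φ φ⁻¹, mul_inv_cancel, sigmaFun_one]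

/-- Extensionality for monoid homs out of a finite direct power. -/
lemma pihom_ext {M : Type} [Monoid M] {f g : (Fin N → G₀) →* M}
    (h : ∀ i x, f (Pi.mulSingle i x) = g (Pi.mulSingle i x)) : f = g := by
  set e := MonoidHom.noncommPiCoprodEquiv (M := M) (ι := Fin N) (N := fun _ : Fin N => G₀)
  have hfg : e.symm f = e.symm g := by
    apply Subtype.ext
    funext i
    ext x
    exact h i x
  calc f = e (e.symm f) := (e.apply_symm_apply f).symm
    _ = e (e.symm g) := by rw [hfg]
    _ = g := e.apply_symm_apply g

lemma apply_eq_of_sigma_id (hna : ¬ ∀ a b : G₀, a * b = b * a) (φ : MulAut (Fin N → G₀))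
    (hσ : ∀ i, sigmaFun hna φ i = i) (f : Fin N → G₀) (j : Fin N) :
    φ f j = psiFun hna φ j (f j) := by
  have key : ((Pi.evalMonoidHom (fun _ : Fin N => G₀) j).comp φ.toMonoidHom)
      = (psiAut hna φ j).toMonoidHom.comp (Pi.evalMonoidHom (fun _ : Fin N => G₀) j) := by
    apply pihom_ext
    intro i x
    show φ (Pi.mulSingle i x) j = psiFun hna φ j ((Pi.mulSingle i x : Fin N → G₀) j)
    rw [apply_single hna φ i x, hσ i]
    rcases eq_or_ne i j with rfl | hij
    · rw [Pi.mulSingle_eq_same, Pi.mulSingle_eq_same]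
    · rw [Pi.mulSingle_eq_of_ne (Ne.symm hij), Pi.mulSingle_eq_of_ne (Ne.symm hij)]
      exact (map_one (psiAut hna φ j)).symm
  exact DFunLike.congr_fun key f

/-- The canonical projection onto the outer automorphism group. -/
def outMk (G : Type) [Group G] : MulAut G →* Out G := QuotientGroup.mk' _

/-- Automorphism of a power built from component automorphisms and a permutation. -/
def mixAut (η : Fin N → MulAut G₀) (p : Equiv.Perm (Fin N)) : MulAut (Fin N → G₀) where
  toFun f := fun j => η j (f (p⁻¹ j))
  invFun f := fun i => (η (p i)).symm (f (p i))
  left_inv f := by funext i; simp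
  right_inv f := by funext j; simp
  map_mul' f g := by funext j; simp

lemma mixAut_single (η : Fin N → MulAut G₀) (p : Equiv.Perm (Fin N)) (i : Fin N) (x : G₀) :
    mixAut η p (Pi.mulSingle i x) = Pi.mulSingle (p i) (η (p i) x) := by
  funext j
  show η j ((Pi.mulSingle i x : Fin N → G₀) (p⁻¹ j))
    = (Pi.mulSingle (p i) (η (p i) x) : Fin N → G₀) j
  rcases eq_or_ne j (p i) with rfl | hj
  · rw [Equiv.Perm.inv_def, Equiv.symm_apply_apply, Pi.mulSingle_eq_same, Pi.mulSingle_eq_same]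
  · have : p⁻¹ j ≠ i := fun h => hj (by rw [← h, Equiv.Perm.inv_def, Equiv.apply_symm_apply])
    rw [Pi.mulSingle_eq_of_ne this, Pi.mulSingle_eq_of_ne hj, map_one]

/-- The decomposition homomorphism `Aut(G₀^N) → Out(G₀)^N ⋊ S_N`. -/
noncomputable def bigHom (hna : ¬ ∀ a b : G₀, a * b = b * a) :
    MulAut (Fin N → G₀) →*
      SemidirectProduct (Fin N → Out G₀) (Equiv.Perm (Fin N)) (permMulAut N (Out G₀)) where
  toFun φ := ⟨fun j => outMk G₀ (psiAut hna φ (sigmaFun hna φ⁻¹ j)), sigmaPerm hna φ⟩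
  map_one' := by
    apply SemidirectProduct.ext
    · show (fun j => outMk G₀ (psiAut hna 1 (sigmaFun hna 1⁻¹ j))) = 1
      funext j
      have h1 : psiAut hna (1 : MulAut (Fin N → G₀)) (sigmaFun hna 1⁻¹ j) = 1 := by
        ext x
        show psiFun hna 1 _ x = x
        simp [psiFun, sigmaFun_one hna]
      rw [h1, map_one]
      rfl
    · exact Equiv.ext fun i => sigmaFun_one hna i
  map_mul' := fun φ φ' => by
    apply SemidirectProduct.ext
    · show (fun j => outMk G₀ (psiAut hna (φ * φ') (sigmaFun hna (φ * φ')⁻¹ j)))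
        = (fun j => outMk G₀ (psiAut hna φ (sigmaFun hna φ⁻¹ j)))
          * (permMulAut N (Out G₀)) (sigmaPerm hna φ)
            (fun j => outMk G₀ (psiAut hna φ' (sigmaFun hna φ'⁻¹ j)))
      funext j
      show outMk G₀ (psiAut hna (φ * φ') (sigmaFun hna (φ * φ')⁻¹ j))
        = outMk G₀ (psiAut hna φ (sigmaFun hna φ⁻¹ j))
          * outMk G₀ (psiAut hna φ' (sigmaFun hna φ'⁻¹ ((sigmaPerm hna φ)⁻¹ j)))
      have hinv : sigmaFun hna (φ * φ')⁻¹ j = sigmaFun hna φ'⁻¹ (sigmaFun hna φ⁻¹ j) := by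
        rw [mul_inv_rev, sigmaFun_mul]
      have hcomp : psiAut hna (φ * φ') (sigmaFun hna (φ * φ')⁻¹ j)
          = psiAut hna φ (sigmaFun hna φ⁻¹ j)
            * psiAut hna φ' (sigmaFun hna φ'⁻¹ (sigmaFun hna φ⁻¹ j)) := by
        ext x
        show psiFun hna (φ * φ') (sigmaFun hna (φ * φ')⁻¹ j) x = _
        rw [hinv, psiFun_mul_apply hna φ φ', sigmaFun_cancel_inv hna φ']
        rfl
      rw [hcomp, map_mul]
      rfl
    · exact Equiv.ext fun i => sigmaFun_mul hna φ φ' i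
  
lemma bigHom_right (hna : ¬ ∀ a b : G₀, a * b = b * a) (φ : MulAut (Fin N → G₀)) :
    (bigHom hna φ).right = sigmaPerm hna φ := rfl

lemma bigHom_left (hna : ¬ ∀ a b : G₀, a * b = b * a) (φ : MulAut (Fin N → G₀)) (j : Fin N) :
    (bigHom hna φ).left j = outMk G₀ (psiAut hna φ (sigmaFun hna φ⁻¹ j)) := rfl

lemma bigHom_ker (hna : ¬ ∀ a b : G₀, a * b = b * a) :
    (bigHom (N := N) hna).ker
      = (MulAut.conj : (Fin N → G₀) →* MulAut (Fin N → G₀)).range := by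
  ext φ
  constructor
  · intro hφ
    rw [MonoidHom.mem_ker] at hφ
    have hright : sigmaPerm hna φ = 1 := by rw [← bigHom_right hna φ, hφ]; rfl
    have hσ : ∀ i, sigmaFun hna φ i = i := fun i => by
      rw [show sigmaFun hna φ i = (sigmaPerm hna φ) i from rfl, hright]; rfl
    have hσ' : ∀ j, sigmaFun hna φ⁻¹ j = j := fun j => by
      conv_lhs => rw [← hσ j]
      exact sigmaFun_inv_cancel hna φ j
    have hleft : ∀ j, outMk G₀ (psiAut hna φ j) = 1 := fun j => by
      have := congrFun (congrArg SemidirectProduct.left hφ) j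
      rwa [bigHom_left, hσ' j] at this
    have hmem : ∀ j, ∃ g : G₀, MulAut.conj g = psiAut hna φ j := fun j => by
      have := (QuotientGroup.eq_one_iff (psiAut hna φ j)).1 (hleft j)
      exact this
    choose g hg using hmem
    refine ⟨g, ?_⟩
    ext f j
    show (MulAut.conj g) f j = φ f j
    rw [apply_eq_of_sigma_id hna φ hσ f j]
    have : psiFun hna φ j (f j) = (psiAut hna φ j) (f j) := rfl
    rw [this, ← hg j, MulAut.conj_apply, MulAut.conj_apply]
    rfl
  · rintro ⟨g, rfl⟩
    rw [MonoidHom.mem_ker]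
    have hsingle : ∀ (i : Fin N) (x : G₀),
        (MulAut.conj g) (Pi.mulSingle i x) = Pi.mulSingle i (g i * x * (g i)⁻¹) := by
      intro i x
      funext j
      show g j * (Pi.mulSingle i x : Fin N → G₀) j * (g j)⁻¹
        = (Pi.mulSingle i (g i * x * (g i)⁻¹) : Fin N → G₀) j
      rcases eq_or_ne j i with rfl | hj
      · rw [Pi.mulSingle_eq_same, Pi.mulSingle_eq_same]
      · rw [Pi.mulSingle_eq_of_ne hj, Pi.mulSingle_eq_of_ne hj, mul_one, mul_inv_cancel]
    have hσ : ∀ i, sigmaFun hna (MulAut.conj g) i = i := fun i =>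
      sigmaFun_eq_of hna _ fun x => by
        rw [hsingle]; exact mulSingle_mem_factorSub i _
    have hσ' : ∀ j, sigmaFun hna (MulAut.conj g)⁻¹ j = j := fun j => by
      conv_lhs => rw [← hσ j]
      exact sigmaFun_inv_cancel hna _ j
    have hψ : ∀ i, psiAut hna (MulAut.conj g) i = MulAut.conj (g i) := fun i => by
      ext x
      show psiFun hna (MulAut.conj g) i x = _
      rw [psiFun, hsingle, hσ i, Pi.mulSingle_eq_same]
      rfl
    apply SemidirectProduct.ext
    · funext j
      show outMk G₀ (psiAut hna (MulAut.conj g) (sigmaFun hna (MulAut.conj g)⁻¹ j)) = 1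
      rw [hσ' j, hψ j]
      exact (QuotientGroup.eq_one_iff _).2 ⟨g j, rfl⟩
    · exact Equiv.ext fun i => hσ i

lemma bigHom_surjective (hna : ¬ ∀ a b : G₀, a * b = b * a) :
    Function.Surjective (bigHom (N := N) hna) := by
  rintro ⟨o, p⟩
  have : ∀ j, ∃ e : MulAut G₀, (QuotientGroup.mk e : Out G₀) = o j := fun j =>
    QuotientGroup.mk_surjective (o j)
  choose η hη using this
  refine ⟨mixAut η p, ?_⟩
  have hσ : ∀ i, sigmaFun hna (mixAut η p) i = p i := fun i =>
    sigmaFun_eq_of hna _ fun x => by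
      rw [mixAut_single]; exact mulSingle_mem_factorSub _ _
  have hσ' : ∀ j, sigmaFun hna (mixAut η p)⁻¹ j = p⁻¹ j := fun j => by
    conv_lhs => rw [show j = sigmaFun hna (mixAut η p) (p⁻¹ j) by
      rw [hσ, Equiv.Perm.inv_def, Equiv.apply_symm_apply]]
    exact sigmaFun_inv_cancel hna _ _
  have hψ : ∀ i, psiAut hna (mixAut η p) i = η (p i) := fun i => by
    ext x
    show psiFun hna (mixAut η p) i x = _
    rw [psiFun, mixAut_single, hσ i, Pi.mulSingle_eq_same]
  apply SemidirectProduct.ext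
  · funext j
    show outMk G₀ (psiAut hna (mixAut η p) (sigmaFun hna (mixAut η p)⁻¹ j)) = o j
    rw [hσ' j, hψ, Equiv.Perm.inv_def, Equiv.apply_symm_apply]
    exact hη j
  · exact Equiv.ext fun i => hσ i

end Simple

end OutPower

/-- For a finite non-abelian simple group `G₀` and `N ≥ 1`,
`Out(G₀^N) ≅ Out(G₀)^N ⋊ S_N`, with `S_N` permuting the factors. -/
theorem out_power_iso (G₀ : Type) [Group G₀] [Finite G₀] [IsSimpleGroup G₀]
    (hna : ¬ ∀ a b : G₀, a * b = b * a) (N : ℕ) (hN : 1 ≤ N) :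
    Nonempty (Out (Fin N → G₀) ≃*
      SemidirectProduct (Fin N → Out G₀) (Equiv.Perm (Fin N))
        (permMulAut N (Out G₀))) := by
  refine ⟨MulEquiv.trans ?_ (QuotientGroup.quotientKerEquivOfSurjective _ (bigHom_surjective hna))⟩
  exact QuotientGroup.quotientMulEquivOfEq (bigHom_ker hna).symm
end

section
/- Let G₀ be a finite non-abelian simple group such that the exact sequence 1 → Inn(G₀) → Aut(G₀) → Out(G₀) → 1 splits. Then for every N ≥ 1 and every finite group G, every extension of G₀^N by G is a semidirect product G₀^N ⋊ G. -/
set_option linter.unusedVariables false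

section Aux
variable {G₀ : Type} [Group G₀]

lemma exists_ne_one_of_na (hna : ¬ ∀ a b : G₀, a * b = b * a) : ∃ g : G₀, g ≠ 1 := by
  push_neg at hna
  obtain ⟨a, b, h⟩ := hna
  exact ⟨a, fun h1 => h (by simp [h1])⟩

lemma eq_one_of_central [IsSimpleGroup G₀] (hna : ¬ ∀ a b : G₀, a * b = b * a)
    (g : G₀) (hg : ∀ h, g * h = h * g) : g = 1 := by
  rcases (inferInstance : (Subgroup.center G₀).Normal).eq_bot_or_eq_top with h | h
  · have : g ∈ Subgroup.center G₀ := Subgroup.mem_center_iff.mpr fun h' => (hg h').symm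
    rw [h] at this
    exact Subgroup.mem_bot.mp this
  · exact absurd (fun a b => by
      have : a ∈ Subgroup.center G₀ := h ▸ Subgroup.mem_top a
      exact (Subgroup.mem_center_iff.mp this b).symm) hna

/-- The `i`-th factor of `G₀^N` as a subgroup. -/
def Factor (N : ℕ) (G₀ : Type) [Group G₀] (i : Fin N) : Subgroup (Fin N → G₀) where
  carrier := {x | ∀ j, j ≠ i → x j = 1}
  one_mem' := fun _ _ => rfl
  mul_mem' := fun {a b} ha hb j hj => by simp [ha j hj, hb j hj]
  inv_mem' := fun {a} ha j hj => by simp [ha j hj]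

lemma factor_normal (N : ℕ) (i : Fin N) : (Factor N G₀ i).Normal := by
  constructor
  intro x hx g j hj
  simp [hx j hj]

lemma mulSingle_mem_factor (N : ℕ) (i : Fin N) (g : G₀) :
    Pi.mulSingle i g ∈ Factor N G₀ i := fun _ hj => by
  rw [Pi.mulSingle_eq_of_ne hj]

lemma eq_mulSingle_of_mem_factor {N : ℕ} {i : Fin N} {x : Fin N → G₀}
    (hx : x ∈ Factor N G₀ i) : x = Pi.mulSingle i (x i) := by
  funext j
  by_cases hj : j = i
  · subst hj; simp
  · rw [hx j hj, Pi.mulSingle_eq_of_ne hj]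

lemma factor_le_factor {N : ℕ} {i k : Fin N} (hna : ¬ ∀ a b : G₀, a * b = b * a)
    (h : Factor N G₀ k ≤ Factor N G₀ i) : k = i := by
  by_contra hk
  obtain ⟨g, hg⟩ := exists_ne_one_of_na hna
  have := h (mulSingle_mem_factor N k g) k hk
  rw [Pi.mulSingle_eq_same] at this
  exact hg this

lemma factor_le_of_normal [IsSimpleGroup G₀] (hna : ¬ ∀ a b : G₀, a * b = b * a)
    {N : ℕ} {M : Subgroup (Fin N → G₀)} (hM : M.Normal)
    {x : Fin N → G₀} (hx : x ∈ M) {i : Fin N} (hxi : x i ≠ 1) :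
    Factor N G₀ i ≤ M := by
  have hnc : ¬ ∀ h, x i * h = h * x i := fun h => hxi (eq_one_of_central hna _ h)
  push_neg at hnc
  obtain ⟨g, hg⟩ := hnc
  set u : Fin N → G₀ := Pi.mulSingle i g with hu
  set y := x * (u * x⁻¹ * u⁻¹) with hy
  have hyM : y ∈ M := M.mul_mem hx (by
    have := hM.conj_mem _ (M.inv_mem hx) u
    simpa [mul_assoc] using this)
  have hyF : y ∈ Factor N G₀ i := by
    intro j hj
    simp [hy, hu, Pi.mulSingle_eq_of_ne hj]
  have hyi : y i ≠ 1 := by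
    intro h
    have h' : x i * g * (x i)⁻¹ * g⁻¹ = 1 := by
      simpa [hy, hu, mul_assoc] using h
    rw [mul_inv_eq_one, mul_inv_eq_iff_eq_mul] at h'
    exact hg h'
  set S : Subgroup G₀ := M.comap (MonoidHom.mulSingle (fun _ : Fin N => G₀) i) with hS
  have hSn : S.Normal := by
    constructor
    intro n hn h
    have : ((MonoidHom.mulSingle (fun _ : Fin N => G₀) i) h) *
        ((MonoidHom.mulSingle (fun _ : Fin N => G₀) i) n) *
        ((MonoidHom.mulSingle (fun _ : Fin N => G₀) i) h)⁻¹ ∈ M :=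
      hM.conj_mem _ hn _
    refine Subgroup.mem_comap.mpr ?_
    have h2 : (MonoidHom.mulSingle (fun _ : Fin N => G₀) i) (h * n * h⁻¹) =
        ((MonoidHom.mulSingle (fun _ : Fin N => G₀) i) h) *
        ((MonoidHom.mulSingle (fun _ : Fin N => G₀) i) n) *
        ((MonoidHom.mulSingle (fun _ : Fin N => G₀) i) h)⁻¹ := by
      simp [map_mul, Pi.mulSingle_inv]
    rw [h2]
    exact this
  have hyS : y i ∈ S := by
    have : Pi.mulSingle i (y i) ∈ M := by
      rw [← eq_mulSingle_of_mem_factor hyF]; exact hyM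
    simpa [hS, Subgroup.mem_comap] using this
  rcases hSn.eq_bot_or_eq_top with hbot | htop
  · rw [hbot] at hyS
    exact absurd (Subgroup.mem_bot.mp hyS) hyi
  · intro z hz
    have : z i ∈ S := htop ▸ Subgroup.mem_top (z i)
    have hz' : Pi.mulSingle i (z i) ∈ M := this
    rwa [← eq_mulSingle_of_mem_factor hz] at hz'

lemma map_symm_map {K : Type} [Group K] (α : MulAut K) (H : Subgroup K) :
    (H.map α.toMonoidHom).map α.symm.toMonoidHom = H := by
  rw [Subgroup.map_map]
  have : (α.symm.toMonoidHom.comp α.toMonoidHom) = MonoidHom.id K := by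
    ext x; simp
  rw [this, Subgroup.map_id]

lemma mulSingle_ne_one {N : ℕ} {i : Fin N} {g : G₀} (hg : g ≠ 1) :
    Pi.mulSingle i g ≠ (1 : Fin N → G₀) := by
  intro h
  apply hg
  have := congrFun h i
  simpa using this

lemma exists_factor_le_map [IsSimpleGroup G₀] (hna : ¬ ∀ a b : G₀, a * b = b * a)
    {N : ℕ} (α : MulAut (Fin N → G₀)) (i : Fin N) :
    ∃ j, Factor N G₀ j ≤ (Factor N G₀ i).map α.toMonoidHom := by
  obtain ⟨g, hg⟩ := exists_ne_one_of_na hna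
  have hmem : α (Pi.mulSingle i g) ∈ (Factor N G₀ i).map α.toMonoidHom :=
    ⟨_, mulSingle_mem_factor N i g, rfl⟩
  have hne : α (Pi.mulSingle i g) ≠ 1 := by
    intro h
    exact mulSingle_ne_one hg (α.injective (h.trans (map_one α).symm))
  obtain ⟨j, hj⟩ : ∃ j, α (Pi.mulSingle i g) j ≠ 1 := by
    by_contra hcon
    push_neg at hcon
    exact hne (funext hcon)
  have hnormal : ((Factor N G₀ i).map α.toMonoidHom).Normal := by
    constructor
    intro n hn gk
    obtain ⟨m, hm, rfl⟩ := hn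
    refine ⟨α.symm gk * m * (α.symm gk)⁻¹, (factor_normal N i).conj_mem m hm _, ?_⟩
    simp [map_mul]
  exact ⟨j, factor_le_of_normal hna hnormal hmem hj⟩

lemma map_factor_eq [IsSimpleGroup G₀] (hna : ¬ ∀ a b : G₀, a * b = b * a)
    {N : ℕ} (α : MulAut (Fin N → G₀)) (i : Fin N) :
    ∃ j, (Factor N G₀ i).map α.toMonoidHom = Factor N G₀ j := by
  obtain ⟨j, hj⟩ := exists_factor_le_map hna α i
  refine ⟨j, le_antisymm ?_ hj⟩
  obtain ⟨k, hk⟩ := exists_factor_le_map hna α.symm j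
  have h2 : (Factor N G₀ j).map α.symm.toMonoidHom ≤ Factor N G₀ i := by
    have := Subgroup.map_mono (f := α.symm.toMonoidHom) hj
    rwa [map_symm_map] at this
  have hk' : k = i := factor_le_factor hna (hk.trans h2)
  rw [hk'] at hk
  have h3 := Subgroup.map_mono (f := α.toMonoidHom) hk
  have h4 : ((Factor N G₀ j).map α.symm.toMonoidHom).map α.toMonoidHom = Factor N G₀ j := by
    have := map_symm_map α.symm (Factor N G₀ j)
    simpa using this
  rwa [h4] at h3

lemma noncommProd_eq_single' {eta M : Type} [Fintype eta] [DecidableEq eta] [Monoid M]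
    (g : eta → M) (comm) (i₀ : eta) (h : ∀ i, i ≠ i₀ → g i = 1) :
    Finset.univ.noncommProd g comm = g i₀ := by
  rw [Finset.noncommProd_congr (Finset.insert_erase (Finset.mem_univ i₀)).symm
    (fun x _ => rfl) comm]
  refine (Finset.noncommProd_insert_of_notMem _ _ _ _ (Finset.notMem_erase _ _)).trans ?_
  rw [Finset.noncommProd_eq_pow_card _ _ _ 1 (fun i hi => h i (Finset.ne_of_mem_erase hi))]
  rw [one_pow, mul_one]

lemma exists_wreath [IsSimpleGroup G₀] (hna : ¬ ∀ a b : G₀, a * b = b * a)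
    {N : ℕ} (α : MulAut (Fin N → G₀)) :
    ∃ (ρ : Equiv.Perm (Fin N)) (b : Fin N → MulAut G₀),
      ∀ x j, α x j = b j (x (ρ.symm j)) := by
  choose r hr using fun i => map_factor_eq hna α i
  have hrinj : Function.Injective r := by
    intro i i' h
    have h1 : (Factor N G₀ i).map α.toMonoidHom = (Factor N G₀ i').map α.toMonoidHom := by
      rw [hr i, hr i', h]
    have h2 : Factor N G₀ i = Factor N G₀ i' := by
      have := congrArg (Subgroup.map α.symm.toMonoidHom) h1
      rwa [map_symm_map, map_symm_map] at this
    exact factor_le_factor hna h2.le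
  let ρ : Equiv.Perm (Fin N) := Equiv.ofBijective r (Finite.injective_iff_bijective.mp hrinj)
  have hρ : ∀ i, ρ i = r i := fun i => rfl
  -- the restriction homomorphisms
  have hmapmem : ∀ i g, α (Pi.mulSingle i g) ∈ Factor N G₀ (r i) := by
    intro i g
    rw [← hr i]
    exact ⟨_, mulSingle_mem_factor N i g, rfl⟩
  let β : ∀ _ : Fin N, G₀ →* G₀ := fun i =>
    { toFun := fun g => α (Pi.mulSingle i g) (r i)
      map_one' := by simp
      map_mul' := fun g h => by
        show α (Pi.mulSingle i (g * h)) (r i) = _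
        rw [Pi.mulSingle_mul, map_mul]
        rfl }
  have hsingle : ∀ i g, α (Pi.mulSingle i g) = Pi.mulSingle (r i) (β i g) :=
    fun i g => eq_mulSingle_of_mem_factor (hmapmem i g)
  have hβinj : ∀ i, Function.Injective (β i) := by
    intro i
    refine (injective_iff_map_eq_one (β i)).mpr (fun g hg => ?_)
    have h1 : α (Pi.mulSingle i g) = 1 := by
      rw [hsingle i g, hg, Pi.mulSingle_one]
    have h2 : Pi.mulSingle i g = (1 : Fin N → G₀) :=
      α.injective (h1.trans (map_one α).symm)
    have := congrFun h2 i
    simpa using this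
  have hβsurj : ∀ i, Function.Surjective (β i) := by
    intro i h
    have : Pi.mulSingle (r i) h ∈ (Factor N G₀ i).map α.toMonoidHom := by
      rw [hr i]; exact mulSingle_mem_factor N (r i) h
    obtain ⟨x, hx, hαx⟩ := this
    refine ⟨x i, ?_⟩
    have hx' : x = Pi.mulSingle i (x i) := eq_mulSingle_of_mem_factor hx
    have : α (Pi.mulSingle i (x i)) (r i) = (Pi.mulSingle (r i) h : Fin N → G₀) (r i) := by
      rw [← hx']; exact congrFun hαx (r i)
    exact (by simpa using this : α (Pi.mulSingle i (x i)) (r i) = h)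
  let b : Fin N → MulAut G₀ := fun i => MulEquiv.ofBijective (β i) ⟨hβinj i, hβsurj i⟩
  have hb : ∀ i g, b i g = β i g := fun i g => rfl
  refine ⟨ρ, fun j => b (ρ.symm j), fun x j => ?_⟩
  set v : Fin N → G₀ := fun i => β i (x i) with hv
  have hsingle' : ∀ i, α (Pi.mulSingle i (x i)) = Pi.mulSingle (r i) (v i) :=
    fun i => hsingle i (x i)
  have hcA : ∀ a c : Fin N, Commute (Pi.mulSingle (r a) (v a) : Fin N → G₀)
      (Pi.mulSingle (r c) (v c)) := by
    intro a c
    rw [← hsingle' a, ← hsingle' c]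
    exact (Pi.mulSingle_apply_commute x a c).map α.toMonoidHom
  have h1 : α x = Finset.univ.noncommProd (fun i => α (Pi.mulSingle i (x i)))
      (fun a _ c _ _ => (Pi.mulSingle_apply_commute x a c).map α.toMonoidHom) := by
    conv_lhs => rw [← Finset.noncommProd_mulSingle x]
    exact Finset.univ.map_noncommProd _ _ α.toMonoidHom
  have h2 : α x = Finset.univ.noncommProd (fun i => Pi.mulSingle (r i) (v i))
      (fun a _ c _ _ => hcA a c) := by
    rw [h1]
    exact Finset.noncommProd_congr rfl (fun i _ => hsingle' i) _
  have h3 : α x j = Finset.univ.noncommProd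
      (fun i => (Pi.mulSingle (r i) (v i) : Fin N → G₀) j)
      (by intro a _ c _ _
          show Commute ((Pi.mulSingle (r a) (v a) : Fin N → G₀) j)
            ((Pi.mulSingle (r c) (v c) : Fin N → G₀) j)
          exact (hcA a c).map (Pi.evalMonoidHom (fun _ => G₀) j)) := by
    rw [h2]
    exact Finset.univ.map_noncommProd (fun i => Pi.mulSingle (r i) (v i))
      (fun a _ c _ _ => hcA a c) (Pi.evalMonoidHom (fun _ => G₀) j)
  have hside : ∀ i, i ≠ ρ.symm j → (Pi.mulSingle (r i) (v i) : Fin N → G₀) j = 1 := by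
    intro i hi
    have hrij : j ≠ r i := by
      intro h
      exact hi (by rw [← hρ i] at h; rw [h, Equiv.symm_apply_apply])
    exact Pi.mulSingle_eq_of_ne hrij _
  have h4 := noncommProd_eq_single'
      (fun i => (Pi.mulSingle (r i) (v i) : Fin N → G₀) j)
      (by intro a _ c _ _
          show Commute ((Pi.mulSingle (r a) (v a) : Fin N → G₀) j)
            ((Pi.mulSingle (r c) (v c) : Fin N → G₀) j)
          exact (hcA a c).map (Pi.evalMonoidHom (fun _ => G₀) j)) (ρ.symm j) hside
  have hrj : r (ρ.symm j) = j := by rw [← hρ]; exact ρ.apply_symm_apply j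
  refine (h3.trans h4).trans ?_
  show (Pi.mulSingle (r (ρ.symm j)) (v (ρ.symm j)) : Fin N → G₀) j = _
  rw [hrj, Pi.mulSingle_eq_same]
  rfl

/-- The complement subgroup of `Inn` inside `Aut(G₀^N)`: automorphisms of wreath
form with components in the range of the splitting `σ`. -/
def Csub {G₀ : Type} [Group G₀] (N : ℕ)
    (σ : (MulAut G₀ ⧸ (MulAut.conj : G₀ →* MulAut G₀).range) →* MulAut G₀) :
    Subgroup (MulAut (Fin N → G₀)) where
  carrier := {α | ∃ (ρ : Equiv.Perm (Fin N)) (a : Fin N → MulAut G₀),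
    (∀ j, a j ∈ σ.range) ∧ ∀ x j, α x j = a j (x (ρ.symm j))}
  one_mem' := ⟨1, 1, fun _ => one_mem _, fun x j => by simp [Equiv.Perm.one_symm]⟩
  mul_mem' := by
    rintro α α' ⟨ρ, a, ha, hw⟩ ⟨ρ', a', ha', hw'⟩
    refine ⟨ρ'.trans ρ, fun j => a j * a' (ρ.symm j),
      fun j => mul_mem (ha j) (ha' _), fun x j => ?_⟩
    show α (α' x) j = _
    rw [hw (α' x) j, hw' x (ρ.symm j)]
    rfl
  inv_mem' := by
    rintro α ⟨ρ, a, ha, hw⟩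
    refine ⟨ρ.symm, fun j => (a (ρ j))⁻¹, fun j => inv_mem (ha _), fun x j => ?_⟩
    have hu : α (fun j' => (a (ρ j'))⁻¹ (x (ρ j'))) = x := by
      funext j'
      rw [hw _ j']
      simp
    conv_lhs => rw [← hu]
    rw [show (α⁻¹ : MulAut (Fin N → G₀)) = α.symm from rfl]
    rw [MulEquiv.symm_apply_apply]
    simp

lemma exists_conj_mul_mem_Csub {G₀ : Type} [Group G₀] [IsSimpleGroup G₀]
    (hna : ¬ ∀ a b : G₀, a * b = b * a) {N : ℕ}
    (σ : (MulAut G₀ ⧸ (MulAut.conj : G₀ →* MulAut G₀).range) →* MulAut G₀)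
    (hσ : ∀ a, QuotientGroup.mk' ((MulAut.conj : G₀ →* MulAut G₀).range) (σ a) = a)
    (α : MulAut (Fin N → G₀)) :
    ∃ k : Fin N → G₀, (MulAut.conj k)⁻¹ * α ∈ Csub N σ := by
  obtain ⟨ρ, b, hw⟩ := exists_wreath hna α
  have hdec : ∀ i : Fin N, ∃ m : G₀,
      b i = MulAut.conj m * σ (QuotientGroup.mk' _ (b i)) := by
    intro i
    have h2 : b i * (σ (QuotientGroup.mk' _ (b i)))⁻¹ ∈ (MulAut.conj : G₀ →* MulAut G₀).range := by
      have hker : QuotientGroup.mk' ((MulAut.conj : G₀ →* MulAut G₀).range)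
          (b i * (σ (QuotientGroup.mk' _ (b i)))⁻¹) = 1 := by
        rw [map_mul, map_inv, hσ]; simp
      exact (QuotientGroup.eq_one_iff _).mp hker
    obtain ⟨m, hm⟩ := h2
    refine ⟨m, ?_⟩
    rw [hm]
    group
  choose m hm using hdec
  refine ⟨fun j => m j, ⟨ρ, fun j => σ (QuotientGroup.mk' _ (b j)),
    fun j => ⟨_, rfl⟩, fun x j => ?_⟩⟩
  show ((MulAut.conj (fun j => m j))⁻¹ : MulAut (Fin N → G₀)) (α x) j = _
  rw [show ((MulAut.conj (fun j => m j))⁻¹ : MulAut (Fin N → G₀))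
      = MulAut.conj (fun j => m j)⁻¹ from (map_inv (MulAut.conj) _).symm]
  rw [MulAut.conj_apply]
  have h3 : α x j = b j (x (ρ.symm j)) := hw x j
  show (fun j => m j)⁻¹ j * α x j * ((fun j => m j)⁻¹)⁻¹ j = _
  rw [h3, hm j]
  show (m j)⁻¹ * ((MulAut.conj (m j)) (σ (QuotientGroup.mk' _ (b j)) (x (ρ.symm j)))) * (m j)⁻¹⁻¹ = _
  rw [MulAut.conj_apply]
  group

lemma eq_one_of_conj_mem_Csub {G₀ : Type} [Group G₀] [IsSimpleGroup G₀]
    (hna : ¬ ∀ a b : G₀, a * b = b * a) {N : ℕ}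
    (σ : (MulAut G₀ ⧸ (MulAut.conj : G₀ →* MulAut G₀).range) →* MulAut G₀)
    (hσ : ∀ a, QuotientGroup.mk' ((MulAut.conj : G₀ →* MulAut G₀).range) (σ a) = a)
    (k : Fin N → G₀) (h : (MulAut.conj k : MulAut (Fin N → G₀)) ∈ Csub N σ) :
    k = 1 := by
  obtain ⟨ρ, a, ha, hw⟩ := h
  have hwc : ∀ (x : Fin N → G₀) j, k j * x j * (k j)⁻¹ = a j (x (ρ.symm j)) := by
    intro x j
    have := hw x j
    rwa [MulAut.conj_apply] at this
  obtain ⟨g, hg⟩ := exists_ne_one_of_na hna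
  have hρ : ∀ j, ρ.symm j = j := by
    intro j
    by_contra hne
    have := hwc (Pi.mulSingle (ρ.symm j) g) j
    rw [Pi.mulSingle_eq_of_ne (Ne.symm hne), Pi.mulSingle_eq_same] at this
    simp only [mul_one] at this
    rw [mul_inv_cancel] at this
    exact hg ((a j).injective (by rw [← this, map_one]))
  have hconj : ∀ j, a j = MulAut.conj (k j) := by
    intro j
    ext g'
    have := hwc (Pi.mulSingle j g') j
    rw [hρ j, Pi.mulSingle_eq_same] at this
    rw [MulAut.conj_apply, this]
  have hkc : ∀ j, MulAut.conj (k j) = 1 := by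
    intro j
    obtain ⟨q, hq⟩ := ha j
    rw [hconj j] at hq
    have h1 : QuotientGroup.mk' ((MulAut.conj : G₀ →* MulAut G₀).range) (MulAut.conj (k j)) = 1 := by
      rw [← MonoidHom.mem_ker, QuotientGroup.ker_mk']
      exact ⟨k j, rfl⟩
    have hq1 : q = 1 := by rw [← hσ q, hq, h1]
    rw [← hq, hq1, map_one]
  funext j
  refine eq_one_of_central hna (k j) (fun h' => ?_)
  have h2 := congrArg (fun e => (e : MulAut G₀) h') (hkc j)
  simp only [MulAut.conj_apply, MulAut.one_apply] at h2
  calc k j * h' = (k j * h' * (k j)⁻¹) * k j := by group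
    _ = h' * k j := by rw [h2]

section ConjSec
variable {K Γ G : Type} [Group K] [Group Γ] [Group G]

/-- Conjugation action of `Γ` on the kernel `K`. -/
noncomputable def conjAct (ι : K →* Γ) (γ : Γ) (x : K) : K :=
  haveI : Nonempty K := ⟨1⟩
  Function.invFun ι (γ * ι x * γ⁻¹)

lemma conjAct_spec (ι : K →* Γ) (π : Γ →* G) (hexact : ι.range = π.ker) (γ : Γ) (x : K) :
    ι (conjAct ι γ x) = γ * ι x * γ⁻¹ := by
  haveI : Nonempty K := ⟨1⟩
  have hmem : γ * ι x * γ⁻¹ ∈ ι.range := by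
    rw [hexact, MonoidHom.mem_ker]
    have h1 : π (ι x) = 1 := by
      rw [← MonoidHom.mem_ker, ← hexact]
      exact ⟨x, rfl⟩
    simp [map_mul, h1]
  exact Function.invFun_eq hmem

/-- The conjugation homomorphism `Γ →* Aut(K)`. -/
noncomputable def phi (ι : K →* Γ) (π : Γ →* G) (hι : Function.Injective ι)
    (hexact : ι.range = π.ker) : Γ →* MulAut K where
  toFun γ :=
    { toFun := conjAct ι γ
      invFun := conjAct ι γ⁻¹
      left_inv := fun x => hι (by
        rw [conjAct_spec ι π hexact, conjAct_spec ι π hexact]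
        group)
      right_inv := fun x => hι (by
        rw [conjAct_spec ι π hexact, conjAct_spec ι π hexact]
        group)
      map_mul' := fun x y => hι (by
        show ι (conjAct ι γ (x * y)) = ι (conjAct ι γ x * conjAct ι γ y)
        rw [conjAct_spec ι π hexact, map_mul, map_mul, conjAct_spec ι π hexact,
          conjAct_spec ι π hexact]
        group) }
  map_one' := by
    ext x
    apply hι
    show ι (conjAct ι 1 x) = ι x
    rw [conjAct_spec ι π hexact]
    group
  map_mul' := fun γ γ' => by
    ext x
    apply hι
    show ι (conjAct ι (γ * γ') x) = ι (conjAct ι γ (conjAct ι γ' x))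
    rw [conjAct_spec ι π hexact, conjAct_spec ι π hexact, conjAct_spec ι π hexact]
    group

lemma phi_inn (ι : K →* Γ) (π : Γ →* G) (hι : Function.Injective ι)
    (hexact : ι.range = π.ker) (m : K) :
    phi ι π hι hexact (ι m) = MulAut.conj m := by
  ext x
  apply hι
  show ι (conjAct ι (ι m) x) = ι (MulAut.conj m x)
  rw [conjAct_spec ι π hexact, MulAut.conj_apply, map_mul, map_mul, map_inv]

end ConjSec

end Aux


/-- If `G₀` is a finite non-abelian simple group whose exact sequence
`1 → Inn(G₀) → Aut(G₀) → Out(G₀) → 1` splits, then for every `N ≥ 1` and every finite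
group `G`, every extension of `G₀^N` by `G` splits, i.e. is a semidirect product
`G₀^N ⋊ G`. -/
theorem extension_of_power_splits (G₀ : Type) [Group G₀] [Finite G₀] [IsSimpleGroup G₀]
    (hna : ¬ ∀ a b : G₀, a * b = b * a)
    (hsplit : ∃ σ : (MulAut G₀ ⧸ (MulAut.conj : G₀ →* MulAut G₀).range) →* MulAut G₀,
      ∀ a, QuotientGroup.mk' ((MulAut.conj : G₀ →* MulAut G₀).range) (σ a) = a)
    (N : ℕ) (hN : 1 ≤ N)
    (Γ G : Type) [Group Γ] [Group G] [Finite G]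
    (ι : (Fin N → G₀) →* Γ) (π : Γ →* G) (hι : Function.Injective ι)
    (hπ : Function.Surjective π) (hexact : ι.range = π.ker) :
    ∃ s : G →* Γ, ∀ g, π (s g) = g := by
  obtain ⟨σ, hσ⟩ := hsplit
  let Φ : Γ →* MulAut (Fin N → G₀) := phi ι π hι hexact
  let T : Subgroup Γ := (Csub N σ).comap Φ
  let πT : T →* G := π.comp T.subtype
  have hinj : Function.Injective πT := by
    intro t t' h
    have hker : t.1 * t'.1⁻¹ ∈ π.ker := by
      rw [MonoidHom.mem_ker, map_mul, map_inv]
      show π t.1 * (π t'.1)⁻¹ = 1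
      have : π t.1 = π t'.1 := h
      rw [this, mul_inv_cancel]
    rw [← hexact] at hker
    obtain ⟨m, hm⟩ := hker
    have hconj : (MulAut.conj m : MulAut (Fin N → G₀)) ∈ Csub N σ := by
      have h1 : Φ (ι m) = MulAut.conj m := phi_inn ι π hι hexact m
      rw [← h1, hm, map_mul, map_inv]
      exact mul_mem t.2 (inv_mem t'.2)
    have hm1 : m = 1 := eq_one_of_conj_mem_Csub hna σ hσ m hconj
    have heq : t.1 = t'.1 := by
      have h2 : (1 : Γ) = t.1 * t'.1⁻¹ := by
        rw [← map_one ι, ← hm1]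
        exact hm
      exact mul_inv_eq_one.mp h2.symm
    exact Subtype.ext heq
  have hsurj : Function.Surjective πT := by
    intro g
    obtain ⟨γ₀, hγ₀⟩ := hπ g
    obtain ⟨k, hk⟩ := exists_conj_mul_mem_Csub hna σ hσ (Φ γ₀)
    have hmem : ι k⁻¹ * γ₀ ∈ T := by
      show Φ (ι k⁻¹ * γ₀) ∈ Csub N σ
      rw [map_mul, phi_inn ι π hι hexact, map_inv]
      exact hk
    refine ⟨⟨ι k⁻¹ * γ₀, hmem⟩, ?_⟩
    show π (ι k⁻¹ * γ₀) = g
    have h1 : π (ι k⁻¹) = 1 := by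
      rw [← MonoidHom.mem_ker, ← hexact]
      exact ⟨k⁻¹, rfl⟩
    rw [map_mul, h1, one_mul, hγ₀]
  let e : T ≃* G := MulEquiv.ofBijective πT ⟨hinj, hsurj⟩
  refine ⟨T.subtype.comp e.symm.toMonoidHom, fun g => ?_⟩
  show π ((e.symm g : T) : Γ) = g
  have : πT (e.symm g) = g := e.apply_symm_apply g
  exact this
end
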